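/- Let n ≥ 3 be an integer, ℓ > 0, r₀ > 0, a ∈ ℝ, r₊ > 0, λ > 0, β > 0, G > 0, and define V : (0,∞) → ℝ by V(r) = (r²/ℓ²)(1 + a/r^{n−1} − r₀ⁿ/rⁿ), assumed positive on (r₊, ∞), and H(r) := V(r)^{−1/2}·(V'(r)/2 + (n−2)·V(r)/r). Then lim_{r→∞} r^{n−1}·V(r)^{1/2}·(H(r) − (n−1)/ℓ) = r₀ⁿ/(2ℓ²). Consequently the Hawking–Horowitz mass E_HH(g) := −(1/(8πG))·lim_{r→∞} λβ r^{n−2} V(r)^{1/2} · r · (H(r) − (n−1)/ℓ) equals −λβr₀ⁿ/(16πGℓ²), which is negative for every a ∈ ℝ. -/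

import Mathlib

open Filter Topology

private lemma key12 (m : ℕ) (ℓ a c r s : ℝ) (hr : 0 < r) (hℓ : ℓ ≠ 0) (hs : 0 < s)
    (hu : (s^2 - 1) * r^(m+3) = a*r - c) :
    r^(m+2) * (r/ℓ*s) * ( (r/ℓ*s)⁻¹ *
      ( (2*r/ℓ^2*s^2 + r^2/ℓ^2*(-((m:ℝ)+2)*a/r^(m+3) + ((m:ℝ)+3)*c/r^(m+4)))/2
        + ((m:ℝ)+1)*(r^2/ℓ^2*s^2)/r) - ((m:ℝ)+2)/ℓ) =
    (((m:ℝ)+2)*(a*r-c)^2/(2*(s+1)^2*r^(m+3)) + c/2)/ℓ^2 := by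
  have hrne : r ≠ 0 := hr.ne'
  have hR : r^(m+3) ≠ 0 := pow_ne_zero _ hrne
  have hs1 : s + 1 ≠ 0 := by positivity
  have hsn : s ≠ 0 := hs.ne'
  have hA : r^(m+2) * (r/ℓ*s) * ( (r/ℓ*s)⁻¹ *
      ( (2*r/ℓ^2*s^2 + r^2/ℓ^2*(-((m:ℝ)+2)*a/r^(m+3) + ((m:ℝ)+3)*c/r^(m+4)))/2
        + ((m:ℝ)+1)*(r^2/ℓ^2*s^2)/r) - ((m:ℝ)+2)/ℓ)
      = (((m:ℝ)+2)*r^(m+3)*s^2 - ((m:ℝ)+2)*r^(m+3)*s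
          + (-((m:ℝ)+2)*a*r + ((m:ℝ)+3)*c)/2)/ℓ^2 := by
    field_simp
    ring
  rw [hA]
  congr 1
  field_simp
  linear_combination (((m:ℝ)+2)*(r^(m+3)*(s+1)^2 + (a*r-c) + (s^2-1)*r^(m+3))) * hu

private lemma derivE12 (m : ℕ) (ℓ a c : ℝ) (r : ℝ) (hr : 0 < r) :
    HasDerivAt (fun x : ℝ => x^2/ℓ^2 * (1 + a/x^(m+2) - c/x^(m+3)))
      (2*r/ℓ^2 * (1 + a/r^(m+2) - c/r^(m+3))
        + r^2/ℓ^2 * (-((m:ℝ)+2)*a/r^(m+3) + ((m:ℝ)+3)*c/r^(m+4))) r := by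
  have hrne : r ≠ 0 := hr.ne'
  have h1 : HasDerivAt (fun x : ℝ => x^2/ℓ^2) (2*r/ℓ^2) r := by
    simpa using (hasDerivAt_pow 2 r).div_const (ℓ^2)
  have h2 : HasDerivAt (fun x : ℝ => a/x^(m+2)) (-((m:ℝ)+2)*a/r^(m+3)) r := by
    have := ((hasDerivAt_pow (m+2) r).inv (pow_ne_zero _ hrne)).const_mul a
    simp only [div_eq_mul_inv]
    refine this.congr_deriv ?_
    have hR : r^(m+3) ≠ 0 := pow_ne_zero _ hrne
    rw [show m + 2 - 1 = m + 1 by omega]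
    push_cast
    field_simp
    ring
  have h3 : HasDerivAt (fun x : ℝ => c/x^(m+3)) (-((m:ℝ)+3)*c/r^(m+4)) r := by
    have := ((hasDerivAt_pow (m+3) r).inv (pow_ne_zero _ hrne)).const_mul c
    simp only [div_eq_mul_inv]
    refine this.congr_deriv ?_
    have hR : r^(m+4) ≠ 0 := pow_ne_zero _ hrne
    rw [show m + 3 - 1 = m + 2 by omega]
    push_cast
    field_simp
    ring
  have hW : HasDerivAt (fun x : ℝ => 1 + a/x^(m+2) - c/x^(m+3))
      (-((m:ℝ)+2)*a/r^(m+3) + ((m:ℝ)+3)*c/r^(m+4)) r := by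
    have := ((hasDerivAt_const r (1:ℝ)).add h2).sub h3
    refine this.congr_deriv ?_
    ring
  have := h1.mul hW
  exact this

/-- r^{n−1}V^{1/2}(H − (n−1)/ℓ) → r₀ⁿ/(2ℓ²), hence the Hawking–Horowitz mass
E_HH = −(1/8πG)·lim λβ r^{n−2}V^{1/2}·r·(H − H₀) equals −λβr₀ⁿ/(16πGℓ²) < 0. -/
theorem stmt_12 (n : ℕ) (hn : 3 ≤ n) (ℓ r₀ : ℝ) (hℓ : 0 < ℓ) (hr₀ : 0 < r₀) (a : ℝ)
    (rp : ℝ) (hrp : 0 < rp) (lam β G : ℝ) (hlam : 0 < lam) (hβ : 0 < β) (hG : 0 < G)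
    (V : ℝ → ℝ)
    (hV : ∀ r > (0 : ℝ), V r = r ^ 2 / ℓ ^ 2 * (1 + a / r ^ (n - 1) - r₀ ^ n / r ^ n))
    (hVpos : ∀ r > rp, 0 < V r)
    (H : ℝ → ℝ)
    (hH : ∀ r > rp, H r = (Real.sqrt (V r))⁻¹ * (deriv V r / 2 + ((n : ℝ) - 2) * V r / r)) :
    Tendsto (fun r => r ^ (n - 1) * Real.sqrt (V r) * (H r - ((n : ℝ) - 1) / ℓ)) atTop
      (nhds (r₀ ^ n / (2 * ℓ ^ 2))) ∧
    Tendsto (fun r => -(1 / (8 * Real.pi * G)) *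
        (lam * β * r ^ (n - 2) * Real.sqrt (V r) * r * (H r - ((n : ℝ) - 1) / ℓ))) atTop
      (nhds (-(lam * β * r₀ ^ n) / (16 * Real.pi * G * ℓ ^ 2))) ∧
    -(lam * β * r₀ ^ n) / (16 * Real.pi * G * ℓ ^ 2) < 0 := by
  obtain ⟨m, rfl⟩ : ∃ m, n = m + 3 := ⟨n - 3, by omega⟩
  have e1 : m + 3 - 1 = m + 2 := by omega
  have e2 : m + 3 - 2 = m + 1 := by omega
  set c : ℝ := r₀ ^ (m + 3) with hc
  have hℓne : ℓ ≠ 0 := hℓ.ne'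
  -- the explicit comparison function
  set T : ℝ → ℝ := fun r =>
    (((m:ℝ)+2)*(a*r-c)^2/(2*(Real.sqrt (1 + a/r^(m+2) - c/r^(m+3))+1)^2*r^(m+3)) + c/2)/ℓ^2
    with hT
  -- limits of the pieces
  have l1 : Tendsto (fun r : ℝ => a / r^(m+2)) atTop (nhds 0) :=
    tendsto_const_nhds.div_atTop (tendsto_pow_atTop (by omega))
  have l2 : Tendsto (fun r : ℝ => c / r^(m+3)) atTop (nhds 0) :=
    tendsto_const_nhds.div_atTop (tendsto_pow_atTop (by omega))
  have hWlim : Tendsto (fun r : ℝ => 1 + a/r^(m+2) - c/r^(m+3)) atTop (nhds 1) := by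
    have h0 : Tendsto (fun _ : ℝ => (1:ℝ)) atTop (nhds 1) := tendsto_const_nhds
    have := (h0.add l1).sub l2
    simpa using this
  have hslim : Tendsto (fun r : ℝ => Real.sqrt (1 + a/r^(m+2) - c/r^(m+3))) atTop (nhds 1) := by
    have := (Real.continuous_sqrt.tendsto 1).comp hWlim
    rwa [Real.sqrt_one] at this
  have hq : Tendsto (fun r : ℝ => (a*r - c)^2 / r^(m+3)) atTop (nhds 0) := by
    have hev : ∀ᶠ r : ℝ in atTop, (a - c/r)^2 / r^(m+1) = (a*r - c)^2 / r^(m+3) := by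
      filter_upwards [eventually_gt_atTop (0:ℝ)] with r hr
      have hrne : r ≠ 0 := hr.ne'
      have h1 : a - c/r = (a*r - c)/r := by field_simp
      rw [h1, div_pow, div_div, ← pow_add, show 2 + (m+1) = m + 3 from by omega]
    refine Tendsto.congr' hev ?_
    have hca : Tendsto (fun r : ℝ => c / r) atTop (nhds 0) :=
      tendsto_const_nhds.div_atTop tendsto_id
    have h1 : Tendsto (fun r : ℝ => a - c / r) atTop (nhds a) := by
      have h0 : Tendsto (fun _ : ℝ => a) atTop (nhds a) := tendsto_const_nhds
      simpa using h0.sub hca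
    exact Tendsto.div_atTop (h1.pow 2) (tendsto_pow_atTop (by omega))
  have hden : Tendsto (fun r : ℝ =>
      2*(Real.sqrt (1 + a/r^(m+2) - c/r^(m+3))+1)^2) atTop (nhds 8) := by
    have h0 : Tendsto (fun _ : ℝ => (1:ℝ)) atTop (nhds 1) := tendsto_const_nhds
    have h1 := (hslim.add h0).pow 2
    have h2 : Tendsto (fun _ : ℝ => (2:ℝ)) atTop (nhds 2) := tendsto_const_nhds
    have := h2.mul h1
    norm_num at this
    exact this
  have hmain : Tendsto (fun r : ℝ =>
      ((m:ℝ)+2)*(a*r-c)^2/(2*(Real.sqrt (1 + a/r^(m+2) - c/r^(m+3))+1)^2*r^(m+3)))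
      atTop (nhds 0) := by
    have hconst : Tendsto (fun r : ℝ =>
        ((m:ℝ)+2)/(2*(Real.sqrt (1 + a/r^(m+2) - c/r^(m+3))+1)^2)) atTop
        (nhds (((m:ℝ)+2)/8)) := tendsto_const_nhds.div hden (by norm_num)
    have h := hconst.mul hq
    have heq : (fun r : ℝ =>
        ((m:ℝ)+2)/(2*(Real.sqrt (1 + a/r^(m+2) - c/r^(m+3))+1)^2) * ((a*r-c)^2/r^(m+3)))
        = fun r : ℝ =>
        ((m:ℝ)+2)*(a*r-c)^2/(2*(Real.sqrt (1 + a/r^(m+2) - c/r^(m+3))+1)^2*r^(m+3)) := by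
      funext r
      rw [div_mul_div_comm]
    rw [heq] at h
    simpa using h
  have hTlim : Tendsto T atTop (nhds (c / (2 * ℓ^2))) := by
    have hc2 : Tendsto (fun _ : ℝ => c/2) atTop (nhds (c/2)) := tendsto_const_nhds
    have h := (hmain.add hc2).div_const (ℓ^2)
    rw [hT, show c / (2 * ℓ^2) = (0 + c/2)/ℓ^2 by ring]
    exact h
  -- the main function is eventually equal to T
  have hEq : ∀ᶠ r : ℝ in atTop,
      r ^ (m + 3 - 1) * Real.sqrt (V r) * (H r - (((m + 3 : ℕ) : ℝ) - 1) / ℓ) = T r := by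
    filter_upwards [eventually_gt_atTop rp, eventually_gt_atTop (0:ℝ)] with r hrrp hr0
    have hrne : r ≠ 0 := hr0.ne'
    have hVr : V r = r^2/ℓ^2 * (1 + a/r^(m+2) - c/r^(m+3)) := by
      rw [hV r hr0, e1]
    have hWpos : 0 < 1 + a/r^(m+2) - c/r^(m+3) := by
      have hv := hVpos r hrrp
      rw [hVr] at hv
      have h0 : (0:ℝ) < r^2/ℓ^2 := by positivity
      nlinarith
    set s : ℝ := Real.sqrt (1 + a/r^(m+2) - c/r^(m+3)) with hsdef
    have hs : 0 < s := Real.sqrt_pos.2 hWpos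
    have hs2 : s^2 = 1 + a/r^(m+2) - c/r^(m+3) := Real.sq_sqrt hWpos.le
    have hsV : Real.sqrt (V r) = r/ℓ * s := by
      rw [hVr, show r^2/ℓ^2 * (1 + a/r^(m+2) - c/r^(m+3))
          = (r/ℓ)^2 * (1 + a/r^(m+2) - c/r^(m+3)) by ring,
        Real.sqrt_mul (sq_nonneg _), Real.sqrt_sq (by positivity : (0:ℝ) ≤ r/ℓ)]
    have hderiv : deriv V r = 2*r/ℓ^2 * (1 + a/r^(m+2) - c/r^(m+3))
        + r^2/ℓ^2 * (-((m:ℝ)+2)*a/r^(m+3) + ((m:ℝ)+3)*c/r^(m+4)) := by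
      have hfe : V =ᶠ[nhds r] (fun x : ℝ => x^2/ℓ^2 * (1 + a/x^(m+2) - c/x^(m+3))) := by
        filter_upwards [Ioi_mem_nhds hr0] with x hx
        rw [hV x hx, e1]
      rw [hfe.deriv_eq, (derivE12 m ℓ a c r hr0).deriv]
    have hu : (s^2 - 1) * r^(m+3) = a*r - c := by
      rw [hs2]
      field_simp
      ring
    have hkey := key12 m ℓ a c r s hr0 hℓne hs hu
    rw [e1, hH r hrrp]
    simp only [hT]
    rw [hsV, hderiv, hVr, ← hsdef, ← hs2]
    push_cast
    have hcast1 : ((m:ℝ) + 3) - 2 = (m:ℝ) + 1 := by ring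
    have hcast2 : ((m:ℝ) + 3) - 1 = (m:ℝ) + 2 := by ring
    rw [hcast1, hcast2]
    linear_combination hkey
  have part1 : Tendsto (fun r => r ^ (m + 3 - 1) * Real.sqrt (V r)
      * (H r - (((m + 3 : ℕ) : ℝ) - 1) / ℓ)) atTop (nhds (r₀ ^ (m+3) / (2 * ℓ ^ 2))) := by
    exact (tendsto_congr' hEq).2 hTlim
  refine ⟨part1, ?_, ?_⟩
  · have hfeq : (fun r : ℝ => -(1 / (8 * Real.pi * G)) *
        (lam * β * r ^ (m + 3 - 2) * Real.sqrt (V r) * r * (H r - (((m + 3 : ℕ) : ℝ) - 1) / ℓ)))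
        = fun r : ℝ => (-(1 / (8 * Real.pi * G)) * (lam * β)) *
          (r ^ (m + 3 - 1) * Real.sqrt (V r) * (H r - (((m + 3 : ℕ) : ℝ) - 1) / ℓ)) := by
      funext r
      rw [e1, e2]
      ring
    rw [hfeq]
    have := part1.const_mul (-(1 / (8 * Real.pi * G)) * (lam * β))
    convert this using 2
    have hπ : Real.pi ≠ 0 := Real.pi_ne_zero
    field_simp
    ring
  · apply div_neg_of_neg_of_pos
    · have : 0 < lam * β * r₀ ^ (m+3) := by positivity
      linarith
    · have := Real.pi_pos
      positivity
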